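/- arXiv:1305.6601 — 2 statements merged into one kernel-verified Lean document; each statement's English description precedes it below -/
import Mathlib

section
/- Let f : I ⊆ (0,∞) → (0,∞) be differentiable on I°, let a, b ∈ I° with a < b, f' integrable on [a,b], and suppose |f'|^q is s-geometrically convex on [a,b] for some q > 1 and s ∈ (0,1]. If |f'(a)| ≤ 1 and |f'(b)| ≤ 1, then |f(√(ab)) − (1/(ln b − ln a)) ∫_a^b f(x)/x dx| ≤ (1/4) ln(b/a) · ((q−1)/(2q−1))^{1−1/q} · [ a|f'(a)|^s g₂(θ₃)^{1/q} + b|f'(b)|^s g₂(θ₄)^{1/q} ]. -/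
open Real MeasureTheory Set

/-- `g` is `s`-geometrically convex on `J`. -/
def SGeometricallyConvexOn (s : ℝ) (J : Set ℝ) (g : ℝ → ℝ) : Prop :=
  ∀ x ∈ J, ∀ y ∈ J, ∀ t ∈ Set.Icc (0:ℝ) 1,
    g (x ^ t * y ^ (1 - t)) ≤ g x ^ t ^ s * g y ^ (1 - t) ^ s

noncomputable def g₁ (u : ℝ) : ℝ :=
  if u = 1 then 1/2 else (u * Real.log u - u + 1) / (Real.log u) ^ 2

noncomputable def g₂ (u : ℝ) : ℝ :=
  if u = 1 then 1 else (u - 1) / Real.log u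

lemma g2_nonneg {u : ℝ} (hu : 0 ≤ u) : 0 ≤ g₂ u := by
  unfold g₂
  rcases eq_or_ne u 1 with h | h
  · simp [h]
  · simp only [h, if_false]
    rcases lt_trichotomy u 1 with hlt | heq | hgt
    · exact div_nonneg_iff.2 (Or.inr ⟨by linarith, Real.log_nonpos hu hlt.le⟩)
    · exact absurd heq h
    · exact div_nonneg (by linarith) (Real.log_nonneg hgt.le)

lemma integral_exp_mul_half (K : ℝ) :
    ∫ t in (0:ℝ)..(1/2), Real.exp (K * t) = (1/2) * g₂ (Real.exp (K/2)) := by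
  rcases eq_or_ne K 0 with rfl | hK
  · simp [g₂]
  · have h1 : ∫ t in (0:ℝ)..(1/2), Real.exp (K * t)
        = K⁻¹ • ∫ x in (K*0)..(K*(1/2)), Real.exp x := by
      rw [intervalIntegral.integral_comp_mul_left (fun x => Real.exp x) hK]
    rw [h1, integral_exp]
    have hne : Real.exp (K/2) ≠ 1 := by
      rw [← Real.exp_zero]
      exact fun h => hK (by have := Real.exp_injective h; linarith)
    unfold g₂
    rw [if_neg hne, Real.log_exp, mul_zero, Real.exp_zero]
    simp only [smul_eq_mul]
    field_simp

lemma final_algebra {q : ℝ} (hq : 1 < q) {L A G : ℝ} (hL : 0 < L) (hA : 0 < A) (hG : 0 ≤ G) :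
    ((1/2:ℝ) ^ (q/(q-1) + 1) / (q/(q-1) + 1)) ^ (1 / (q/(q-1))) * (L^q * (A^q * ((1/2) * G))) ^ (1/q)
      = 1/4 * L * ((q - 1)/(2*q - 1)) ^ (1 - 1/q) * (A * G ^ (1/q)) := by
  have hq0 : 0 < q := by linarith
  have hq1 : 0 < q - 1 := by linarith
  have h2q : 0 < 2*q - 1 := by linarith
  have e1 : q/(q-1) + 1 = (2*q-1)/(q-1) := by field_simp; ring
  have e2 : 1 / (q/(q-1)) = 1 - 1/q := by
    rw [one_div_div]; field_simp
  have e3 : (1:ℝ) - 1/q = (q-1)/q := by field_simp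
  have half_pos : (0:ℝ) < 1/2 := by norm_num
  rw [e1, e2, e3]
  have hC : ((1/2:ℝ) ^ ((2*q-1)/(q-1)) / ((2*q-1)/(q-1)))
      = (1/2:ℝ) ^ ((2*q-1)/(q-1)) * ((q-1)/(2*q-1)) := by
    rw [div_eq_mul_inv, inv_div]
  rw [hC]
  rw [Real.mul_rpow (by positivity) (by positivity)]
  rw [← Real.rpow_mul (by norm_num : (0:ℝ) ≤ 1/2)]
  have e4 : (2*q-1)/(q-1) * ((q-1)/q) = (2*q-1)/q := by
    field_simp
  rw [e4]
  rw [Real.mul_rpow (by positivity) (by positivity),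
      Real.mul_rpow (by positivity) (by positivity),
      Real.mul_rpow (by norm_num) hG]
  rw [← Real.rpow_mul hL.le, ← Real.rpow_mul hA.le]
  rw [mul_one_div_cancel hq0.ne', Real.rpow_one, Real.rpow_one]
  have e5 : (1/2:ℝ) ^ ((2*q-1)/q) * ((1/2:ℝ) ^ ((1:ℝ)/q)) = 1/4 := by
    rw [← Real.rpow_add half_pos]
    have : (2*q-1)/q + 1/q = 2 := by field_simp; ring
    rw [this]
    rw [show (2:ℝ) = ((2:ℕ):ℝ) by norm_num, Real.rpow_natCast]
    norm_num
  calc (1/2:ℝ) ^ ((2*q-1)/q) * ((q-1)/(2*q-1)) ^ ((q-1)/q) *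
        (L * (A * ((1/2:ℝ) ^ ((1:ℝ)/q) * G ^ ((1:ℝ)/q))))
      = ((1/2:ℝ) ^ ((2*q-1)/q) * ((1/2:ℝ) ^ ((1:ℝ)/q))) * L *
          ((q-1)/(2*q-1)) ^ ((q-1)/q) * (A * G ^ ((1:ℝ)/q)) := by ring
    _ = 1/4 * L * ((q-1)/(2*q-1)) ^ ((q-1)/q) * (A * G ^ ((1:ℝ)/q)) := by rw [e5]

set_option maxHeartbeats 2000000 in
theorem stmt_14
    (I : Set ℝ) (hI : I.OrdConnected) (hIpos : I ⊆ Set.Ioi (0:ℝ))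
    (f f' : ℝ → ℝ) (hfpos : ∀ x ∈ I, 0 < f x)
    (a b : ℝ) (ha : a ∈ interior I) (hb : b ∈ interior I) (hab : a < b)
    (hdiff : ∀ x ∈ interior I, HasDerivAt f (f' x) x)
    (hint : IntervalIntegrable f' volume a b)
    (q s : ℝ) (hq : 1 < q) (hs : s ∈ Set.Ioc (0:ℝ) 1)
    (hconv : SGeometricallyConvexOn s (Set.Icc a b) (fun x => |f' x| ^ q))
    (hfa : |f' a| ≤ 1) (hfb : |f' b| ≤ 1) :
    |f (Real.sqrt (a * b)) - (1 / (Real.log b - Real.log a)) * ∫ x in a..b, f x / x| ≤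
      (1 / 4 : ℝ) * Real.log (b / a) * ((q - 1) / (2 * q - 1)) ^ (1 - 1 / q) *
        (a * |f' a| ^ s * (g₂ ((b * |f' b| ^ s / (a * |f' a| ^ s)) ^ (q / 2))) ^ (1 / q)
         + b * |f' b| ^ s * (g₂ ((a * |f' a| ^ s / (b * |f' b| ^ s)) ^ (q / 2))) ^ (1 / q)) := by
  obtain ⟨hs0, hs1⟩ := hs
  have hq0 : 0 < q := by linarith
  have ha0 : 0 < a := hIpos (interior_subset ha)
  have hb0 : 0 < b := hIpos (interior_subset hb)
  have hIab : Icc a b ⊆ I := hI.out (interior_subset ha) (interior_subset hb)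
  have hIoo : Ioo a b ⊆ interior I :=
    interior_maximal (Ioo_subset_Icc_self.trans hIab) isOpen_Ioo
  have hIcc : Icc a b ⊆ interior I := by
    intro x hx
    rcases eq_or_lt_of_le hx.1 with rfl | h1
    · exact ha
    rcases eq_or_lt_of_le hx.2 with h2 | h2
    · exact h2 ▸ hb
    · exact hIoo ⟨h1, h2⟩
  set L : ℝ := Real.log b - Real.log a with hLdef
  have hL : 0 < L := sub_pos.2 (Real.log_lt_log ha0 hab)
  have hlogba : Real.log (b/a) = L := Real.log_div hb0.ne' ha0.ne'
  set φ : ℝ → ℝ := fun t => Real.exp (Real.log a + t * L) with hφdef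
  have hφpos : ∀ t, 0 < φ t := fun t => Real.exp_pos _
  have hφd : ∀ t, HasDerivAt φ (L * φ t) t := by
    intro t
    have h1 : HasDerivAt (fun t : ℝ => Real.log a + t * L) L t := by
      simpa using ((hasDerivAt_id t).mul_const L).const_add (Real.log a)
    have h2 := (Real.hasDerivAt_exp (Real.log a + t * L)).comp t h1
    show HasDerivAt (fun t => Real.exp (Real.log a + t * L)) (L * Real.exp (Real.log a + t * L)) t
    simpa [mul_comm] using h1.exp
  have hφ0 : φ 0 = a := by simp [hφdef, Real.exp_log ha0]
  have hφ1 : φ 1 = b := by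
    simp only [hφdef, one_mul, hLdef]
    rw [show Real.log a + (Real.log b - Real.log a) = Real.log b by ring, Real.exp_log hb0]
  have hφhalf : φ (1/2) = Real.sqrt (a*b) := by
    rw [Real.sqrt_eq_rpow, Real.rpow_def_of_pos (mul_pos ha0 hb0), Real.log_mul ha0.ne' hb0.ne']
    simp only [hφdef, hLdef]
    congr 1
    ring
  have hφmem : ∀ t ∈ Icc (0:ℝ) 1, φ t ∈ Icc a b := by
    intro t ht
    constructor
    · rw [← Real.exp_log ha0]
      exact Real.exp_le_exp.2 (by nlinarith [ht.1, hL.le])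
    · rw [← Real.exp_log hb0]
      apply Real.exp_le_exp.2
      have : t * L ≤ L := by nlinarith [ht.2, hL.le]
      simp only [hLdef] at this ⊢
      linarith
  have hφrpow : ∀ t, φ t = b ^ t * a ^ (1 - t) := by
    intro t
    rw [Real.rpow_def_of_pos hb0, Real.rpow_def_of_pos ha0, ← Real.exp_add]
    simp only [hφdef, hLdef]
    congr 1
    ring
  have hfc : ContinuousOn f (Icc a b) := fun x hx =>
    ((hdiff x (hIcc hx)).continuousAt).continuousWithinAt
  have hsqrtmem : Real.sqrt (a*b) ∈ Icc a b := by
    constructor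
    · nth_rewrite 1 [← Real.sqrt_mul_self ha0.le]
      exact Real.sqrt_le_sqrt (by nlinarith)
    · nth_rewrite 2 [← Real.sqrt_mul_self hb0.le]
      exact Real.sqrt_le_sqrt (by nlinarith)
  by_cases hcase : f' a = 0 ∨ f' b = 0
  · -- degenerate case : RHS = 0 and f is constant on [a,b]
    have hzero : ∀ x ∈ Ioo a b, f' x = 0 := by
      intro x hx
      have hxpos : 0 < x := lt_trans ha0 hx.1
      have hlax : Real.log a < Real.log x := Real.log_lt_log ha0 hx.1
      have hlxb : Real.log x < Real.log b := Real.log_lt_log hxpos hx.2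
      have habmem : a ∈ Icc a b := left_mem_Icc.2 hab.le
      have hbbmem : b ∈ Icc a b := right_mem_Icc.2 hab.le
      rcases hcase with h | h
      · set t : ℝ := (Real.log b - Real.log x)/L with htdef
        have ht0 : 0 < t := div_pos (by linarith) hL
        have ht1 : t ≤ 1 := by
          rw [div_le_one hL]
          simp only [hLdef]; linarith
        have htL : t * L = Real.log b - Real.log x := div_mul_cancel₀ _ hL.ne'
        have hx' : a ^ t * b ^ (1-t) = x := by
          rw [Real.rpow_def_of_pos ha0, Real.rpow_def_of_pos hb0, ← Real.exp_add,
            ← Real.exp_log hxpos]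
          congr 1
          simp only [hLdef] at htL
          nlinarith [htL]
        have key : |f' x| ^ q ≤ (|f' a| ^ q) ^ t ^ s * (|f' b| ^ q) ^ (1-t) ^ s := by
          have h0 := hconv a habmem b hbbmem t ⟨ht0.le, ht1⟩
          rw [hx'] at h0
          exact h0
        have hz1 : |f' a| ^ q = 0 := by
          rw [h, abs_zero, Real.zero_rpow hq0.ne']
        rw [hz1, Real.zero_rpow (ne_of_gt (Real.rpow_pos_of_pos ht0 s)), zero_mul] at key
        have h2 : 0 ≤ |f' x| ^ q := Real.rpow_nonneg (abs_nonneg _) q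
        have h3 : |f' x| ^ q = 0 := le_antisymm key h2
        have := (Real.rpow_eq_zero (abs_nonneg _) hq0.ne').1 h3
        exact abs_eq_zero.1 this
      · set t : ℝ := (Real.log x - Real.log a)/L with htdef
        have ht0 : 0 < t := div_pos (by linarith) hL
        have ht1 : t ≤ 1 := by
          rw [div_le_one hL]
          simp only [hLdef]; linarith
        have htL : t * L = Real.log x - Real.log a := div_mul_cancel₀ _ hL.ne'
        have hx' : b ^ t * a ^ (1-t) = x := by
          rw [Real.rpow_def_of_pos hb0, Real.rpow_def_of_pos ha0, ← Real.exp_add,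
            ← Real.exp_log hxpos]
          congr 1
          simp only [hLdef] at htL
          nlinarith [htL]
        have key : |f' x| ^ q ≤ (|f' b| ^ q) ^ t ^ s * (|f' a| ^ q) ^ (1-t) ^ s := by
          have h0 := hconv b hbbmem a habmem t ⟨ht0.le, ht1⟩
          rw [hx'] at h0
          exact h0
        have hz1 : |f' b| ^ q = 0 := by
          rw [h, abs_zero, Real.zero_rpow hq0.ne']
        rw [hz1, Real.zero_rpow (ne_of_gt (Real.rpow_pos_of_pos ht0 s)), zero_mul] at key
        have h2 : 0 ≤ |f' x| ^ q := Real.rpow_nonneg (abs_nonneg _) q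
        have h3 : |f' x| ^ q = 0 := le_antisymm key h2
        have := (Real.rpow_eq_zero (abs_nonneg _) hq0.ne').1 h3
        exact abs_eq_zero.1 this
    have hconst : ∀ x ∈ Icc a b, f x = f a := by
      have hD : Convex ℝ (Icc a b) := convex_Icc a b
      have hdiffOn : DifferentiableOn ℝ f (interior (Icc a b)) := by
        rw [interior_Icc]
        exact fun x hx => ((hdiff x (hIoo hx)).differentiableAt).differentiableWithinAt
      have hd0 : ∀ x ∈ interior (Icc a b), deriv f x = 0 := by
        rw [interior_Icc]
        intro x hx
        rw [(hdiff x (hIoo hx)).deriv]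
        exact hzero x hx
      have hmono : MonotoneOn f (Icc a b) :=
        monotoneOn_of_deriv_nonneg hD hfc hdiffOn (fun x hx => (hd0 x hx).ge)
      have hanti : AntitoneOn f (Icc a b) :=
        antitoneOn_of_deriv_nonpos hD hfc hdiffOn (fun x hx => (hd0 x hx).le)
      intro x hx
      have hamem : a ∈ Icc a b := left_mem_Icc.2 hab.le
      exact le_antisymm (hanti hamem hx hx.1) (hmono hamem hx hx.1)
    have hintf : ∫ x in a..b, f x / x = f a * L := by
      have heq : EqOn (fun x => f x / x) (fun x => f a * (1/x)) (uIcc a b) := by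
        intro x hx
        rw [uIcc_of_le hab.le] at hx
        simp only
        rw [hconst x hx]
        ring
      rw [intervalIntegral.integral_congr heq, intervalIntegral.integral_const_mul,
        integral_one_div (by rw [uIcc_of_le hab.le]; exact fun h => (ha0.trans_le h.1).false),
        hlogba]
    have hLHS : f (Real.sqrt (a*b)) - (1 / L) * ∫ x in a..b, f x / x = 0 := by
      rw [hintf, hconst _ hsqrtmem]
      field_simp
      ring
    rw [hLHS, abs_zero]
    have hRHS0 : (a * |f' a| ^ s * (g₂ ((b * |f' b| ^ s / (a * |f' a| ^ s)) ^ (q / 2))) ^ (1 / q)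
         + b * |f' b| ^ s * (g₂ ((a * |f' a| ^ s / (b * |f' b| ^ s)) ^ (q / 2))) ^ (1 / q)) = 0 := by
      have hg20 : g₂ 0 = 0 := by
        unfold g₂
        rw [if_neg (by norm_num), Real.log_zero, div_zero]
      rcases hcase with h | h
      · have hA0 : a * |f' a| ^ s = 0 := by
          rw [h, abs_zero, Real.zero_rpow hs0.ne', mul_zero]
        rw [hA0, div_zero, zero_div, Real.zero_rpow (by positivity), hg20,
          Real.zero_rpow (by positivity)]
        ring
      · have hB0 : b * |f' b| ^ s = 0 := by
          rw [h, abs_zero, Real.zero_rpow hs0.ne', mul_zero]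
        rw [hB0, div_zero, zero_div, Real.zero_rpow (by positivity), hg20,
          Real.zero_rpow (by positivity)]
        ring
    rw [hRHS0, mul_zero]
  · push_neg at hcase
    obtain ⟨hfa0, hfb0⟩ := hcase
    have haA : 0 < |f' a| := abs_pos.2 hfa0
    have hbB : 0 < |f' b| := abs_pos.2 hfb0
    set A : ℝ := a * |f' a| ^ s with hAdef
    set B : ℝ := b * |f' b| ^ s with hBdef
    have hA : 0 < A := mul_pos ha0 (Real.rpow_pos_of_pos haA s)
    have hB : 0 < B := mul_pos hb0 (Real.rpow_pos_of_pos hbB s)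
    have swaprpow : ∀ (x u v : ℝ), 0 ≤ x → (x ^ u) ^ v = (x ^ v) ^ u := by
      intro x u v hx
      rw [← Real.rpow_mul hx, ← Real.rpow_mul hx, mul_comm]
    -- pointwise bound on |f' (φ t)|
    have hptw : ∀ t ∈ Icc (0:ℝ) 1, |f' (φ t)| ≤ |f' a| ^ (s*(1-t)) * |f' b| ^ (s*t) := by
      intro t ht
      have ht0 := ht.1
      have ht1 := ht.2
      have key : |f' (φ t)| ^ q ≤ (|f' b| ^ q) ^ t ^ s * (|f' a| ^ q) ^ (1-t) ^ s := by
        have h0 := hconv b (right_mem_Icc.2 hab.le) a (left_mem_Icc.2 hab.le) t ht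
        rw [← hφrpow t] at h0
        exact h0
      have hexp : ∀ u : ℝ, 0 ≤ u → u ≤ 1 → ∀ c : ℝ, 0 < c → c ≤ 1 →
          c ^ (u ^ s) ≤ c ^ (s * u) := by
        intro u hu0 hu1 c hc0 hc1
        apply Real.rpow_le_rpow_of_exponent_ge hc0 hc1
        have h1 : u ^ (1:ℝ) ≤ u ^ s := Real.rpow_le_rpow_of_exponent_ge' hu0 hu1 hs0.le hs1
        rw [Real.rpow_one] at h1
        nlinarith
      have hfbq : |f' b| ^ q ≤ 1 := Real.rpow_le_one (abs_nonneg _) hfb hq0.le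
      have hfaq : |f' a| ^ q ≤ 1 := Real.rpow_le_one (abs_nonneg _) hfa hq0.le
      have hfbq0 : 0 < |f' b| ^ q := Real.rpow_pos_of_pos hbB q
      have hfaq0 : 0 < |f' a| ^ q := Real.rpow_pos_of_pos haA q
      have key2 : |f' (φ t)| ^ q ≤ (|f' b| ^ q) ^ (s*t) * (|f' a| ^ q) ^ (s*(1-t)) := by
        refine key.trans (mul_le_mul (hexp t ht0 ht1 _ hfbq0 hfbq)
          (hexp (1-t) (by linarith) (by linarith) _ hfaq0 hfaq)
          (Real.rpow_nonneg hfaq0.le _) (Real.rpow_nonneg hfbq0.le _))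
      have key3 : |f' (φ t)| ^ q ≤ (|f' a| ^ (s*(1-t)) * |f' b| ^ (s*t)) ^ q := by
        rw [Real.mul_rpow (Real.rpow_nonneg (abs_nonneg _) _) (Real.rpow_nonneg (abs_nonneg _) _),
          swaprpow _ _ _ (abs_nonneg (f' a)), swaprpow _ _ _ (abs_nonneg (f' b))]
        exact key2.trans_eq (mul_comm _ _)
      have h4 := Real.rpow_le_rpow (Real.rpow_nonneg (abs_nonneg _) q) key3
        (le_of_lt (by positivity : (0:ℝ) < 1/q))
      rw [← Real.rpow_mul (abs_nonneg _), ← Real.rpow_mul (by positivity),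
        mul_one_div_cancel hq0.ne', Real.rpow_one, Real.rpow_one] at h4
      exact h4
    set ψ : ℝ → ℝ := fun t => f' (φ t) * (L * φ t) with hψdef
    have hψabs : ∀ t, |ψ t| = (L * φ t) * |f' (φ t)| := by
      intro t
      rw [hψdef]
      simp only
      rw [abs_mul, abs_of_pos (mul_pos hL (hφpos t))]
      ring
    have hGd : ∀ t ∈ Icc (0:ℝ) 1, HasDerivAt (fun u => f (φ u)) (ψ t) t := fun t ht =>
      (hdiff (φ t) (hIcc (hφmem t ht))).comp t (hφd t)
    have hψbound : ∀ t ∈ Icc (0:ℝ) 1, |ψ t| ≤ L * (A ^ (1-t) * B ^ t) := by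
      intro t ht
      have hAe : A ^ (1-t) = a ^ (1-t) * |f' a| ^ (s*(1-t)) := by
        rw [hAdef, Real.mul_rpow ha0.le (Real.rpow_nonneg (abs_nonneg _) _),
          ← Real.rpow_mul (abs_nonneg _)]
      have hBe : B ^ t = b ^ t * |f' b| ^ (s*t) := by
        rw [hBdef, Real.mul_rpow hb0.le (Real.rpow_nonneg (abs_nonneg _) _),
          ← Real.rpow_mul (abs_nonneg _)]
      calc |ψ t| = (L * φ t) * |f' (φ t)| := hψabs t
        _ ≤ (L * φ t) * (|f' a| ^ (s*(1-t)) * |f' b| ^ (s*t)) :=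
            mul_le_mul_of_nonneg_left (hptw t ht) (by positivity)
        _ = L * (A ^ (1-t) * B ^ t) := by rw [hAe, hBe, hφrpow t]; ring
    have hψb1 : ∀ t ∈ Icc (0:ℝ) 1, |ψ t| ≤ L * b := by
      intro t ht
      have h2 : |f' (φ t)| ≤ 1 := by
        refine (hptw t ht).trans ?_
        have e1 : |f' a| ^ (s*(1-t)) ≤ 1 :=
          Real.rpow_le_one (abs_nonneg _) hfa (by nlinarith [ht.1, ht.2])
        have e2 : |f' b| ^ (s*t) ≤ 1 :=
          Real.rpow_le_one (abs_nonneg _) hfb (mul_nonneg hs0.le ht.1)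
        nlinarith [Real.rpow_nonneg (abs_nonneg (f' a)) (s*(1-t)),
          Real.rpow_nonneg (abs_nonneg (f' b)) (s*t)]
      calc |ψ t| = (L * φ t) * |f' (φ t)| := hψabs t
        _ ≤ (L * b) * 1 := mul_le_mul
            (mul_le_mul_of_nonneg_left (hφmem t ht).2 hL.le) h2 (abs_nonneg _)
            (by positivity)
        _ = L * b := mul_one _
    have hφcont : Continuous φ := by
      rw [hφdef]
      exact Real.continuous_exp.comp (continuous_const.add (continuous_id.mul continuous_const))
    have hψmeas : ∀ {c d : ℝ}, Ioc c d ⊆ Icc (0:ℝ) 1 →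
        AEStronglyMeasurable ψ (volume.restrict (Ioc c d)) := by
      intro c d hsub
      have hm : Measurable (fun t => deriv f (φ t) * (L * φ t)) :=
        ((measurable_deriv f).comp hφcont.measurable).mul
          (measurable_const.mul hφcont.measurable)
      refine hm.aestronglyMeasurable.congr ?_
      refine (ae_restrict_iff' measurableSet_Ioc).2 (Filter.Eventually.of_forall fun t ht => ?_)
      have hde : deriv f (φ t) = f' (φ t) := (hdiff (φ t) (hIcc (hφmem t (hsub ht)))).deriv
      rw [hψdef]
      simp only
      rw [hde]
    have hψint : ∀ c d : ℝ, c ≤ d → Ioc c d ⊆ Icc (0:ℝ) 1 →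
        IntervalIntegrable ψ volume c d := by
      intro c d hcd hsub
      rw [intervalIntegrable_iff_integrableOn_Ioc_of_le hcd]
      refine Integrable.mono' (integrable_const (L * b)) (hψmeas hsub) ?_
      refine (ae_restrict_iff' measurableSet_Ioc).2 (Filter.Eventually.of_forall fun t ht => ?_)
      rw [Real.norm_eq_abs]
      exact hψb1 t (hsub ht)
    have hsub1 : Ioc (0:ℝ) (1/2) ⊆ Icc (0:ℝ) 1 := fun t ht => ⟨ht.1.le, by linarith [ht.2]⟩
    have hsub2 : Ioc (1/2:ℝ) 1 ⊆ Icc (0:ℝ) 1 := fun t ht => ⟨by linarith [ht.1], ht.2⟩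
    have huIcc1 : uIcc (0:ℝ) (1/2) ⊆ Icc (0:ℝ) 1 := by
      rw [uIcc_of_le (by norm_num)]
      exact Icc_subset_Icc (le_refl _) (by norm_num)
    have huIcc2 : uIcc (1/2:ℝ) 1 ⊆ Icc (0:ℝ) 1 := by
      rw [uIcc_of_le (by norm_num)]
      exact Icc_subset_Icc (by norm_num) (le_refl _)
    have hGcont : ContinuousOn (fun u => f (φ u)) (Icc (0:ℝ) 1) := fun t ht =>
      (((hdiff (φ t) (hIcc (hφmem t ht))).continuousAt.comp
        hφcont.continuousAt)).continuousWithinAt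
    have hGint : ∀ c d : ℝ, uIcc c d ⊆ Icc (0:ℝ) 1 →
        IntervalIntegrable (fun u => f (φ u)) volume c d := fun c d h =>
      (hGcont.mono h).intervalIntegrable
    have h1 : ∫ t in (0:ℝ)..(1/2), t * ψ t
        = (1/2) * f (φ (1/2)) - ∫ t in (0:ℝ)..(1/2), f (φ t) := by
      have hh := intervalIntegral.integral_mul_deriv_eq_deriv_mul
        (u := fun t : ℝ => t) (u' := fun _ => (1:ℝ)) (v := fun u => f (φ u)) (v' := ψ)
        (fun x _ => hasDerivAt_id x) (fun x hx => hGd x (huIcc1 hx))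
        intervalIntegrable_const (hψint 0 (1/2) (by norm_num) hsub1)
      simpa using hh
    have h2 : ∫ t in (1/2:ℝ)..1, (t - 1) * ψ t
        = (1/2) * f (φ (1/2)) - ∫ t in (1/2:ℝ)..1, f (φ t) := by
      have hh := intervalIntegral.integral_mul_deriv_eq_deriv_mul
        (u := fun t : ℝ => t - 1) (u' := fun _ => (1:ℝ)) (v := fun u => f (φ u)) (v' := ψ)
        (fun x _ => (hasDerivAt_id x).sub_const 1) (fun x hx => hGd x (huIcc2 hx))
        intervalIntegrable_const (hψint (1/2) 1 (by norm_num) hsub2)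
      simp only [sub_self, zero_mul, one_mul] at hh
      rw [hh]
      norm_num
    have hsplit : ∫ t in (0:ℝ)..1, f (φ t)
        = (∫ t in (0:ℝ)..(1/2), f (φ t)) + ∫ t in (1/2:ℝ)..1, f (φ t) :=
      (intervalIntegral.integral_add_adjacent_intervals
        (hGint 0 (1/2) huIcc1) (hGint (1/2) 1 huIcc2)).symm
    have hchg : ∫ x in a..b, f x / x = L * ∫ t in (0:ℝ)..1, f (φ t) := by
      have hsubimg : φ '' (uIcc (0:ℝ) 1) ⊆ Icc a b := by
        rw [uIcc_of_le zero_le_one]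
        rintro _ ⟨t, ht, rfl⟩
        exact hφmem t ht
      have hg : ContinuousOn (fun x => f x / x) (φ '' (uIcc (0:ℝ) 1)) := by
        refine ContinuousOn.mono ?_ hsubimg
        exact hfc.div continuousOn_id (fun x hx => ne_of_gt (lt_of_lt_of_le ha0 hx.1))
      have hcv := intervalIntegral.integral_comp_smul_deriv'' (a := (0:ℝ)) (b := 1)
        (f := φ) (f' := fun t => L * φ t) (g := fun x => f x / x)
        hφcont.continuousOn (fun x _ => (hφd x).hasDerivWithinAt)
        (continuous_const.mul hφcont).continuousOn hg
      rw [hφ0, hφ1] at hcv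
      rw [← hcv, ← intervalIntegral.integral_const_mul]
      apply intervalIntegral.integral_congr
      intro t _
      simp only [Function.comp_apply, smul_eq_mul]
      field_simp
      exact mul_div_cancel_left₀ _ (hφpos t).ne'
    have hiden : f (Real.sqrt (a*b)) - ∫ t in (0:ℝ)..1, f (φ t)
        = (∫ t in (0:ℝ)..(1/2), t * ψ t) + ∫ t in (1/2:ℝ)..1, (t - 1) * ψ t := by
      rw [← hφhalf, h1, h2, hsplit]
      ring
    have hmain : |f (Real.sqrt (a*b)) - (1/L) * ∫ x in a..b, f x / x|
        = |(∫ t in (0:ℝ)..(1/2), t * ψ t) + ∫ t in (1/2:ℝ)..1, (t - 1) * ψ t| := by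
      rw [hchg, show (1/L) * (L * ∫ t in (0:ℝ)..1, f (φ t)) = ∫ t in (0:ℝ)..1, f (φ t) by
        field_simp, hiden]
    -- Hölder machinery
    set p : ℝ := q/(q-1) with hpdef
    have hpq : p.HolderConjugate q := (Real.HolderConjugate.conjExponent hq).symm
    have hp1 : 1 < p := hpq.lt
    have hCp : ∫ t in (0:ℝ)..(1/2), t ^ p = (1/2:ℝ)^(p+1)/(p+1) := by
      rw [integral_rpow (Or.inl (by linarith : (-1:ℝ) < p))]
      rw [Real.zero_rpow (by positivity)]
      ring
    haveI hfin1 : IsFiniteMeasure (volume.restrict (Ioc (0:ℝ) (1/2))) :=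
      ⟨by rw [Measure.restrict_apply_univ]; exact measure_Ioc_lt_top⟩
    haveI hfin2 : IsFiniteMeasure (volume.restrict (Ioc (1/2:ℝ) 1)) :=
      ⟨by rw [Measure.restrict_apply_univ]; exact measure_Ioc_lt_top⟩
    set K₁ : ℝ := q * (Real.log B - Real.log A) with hK1def
    set K₂ : ℝ := q * (Real.log A - Real.log B) with hK2def
    have hθ₃ : Real.exp (K₁/2) = (B/A) ^ (q/2) := by
      rw [Real.rpow_def_of_pos (div_pos hB hA), Real.log_div hB.ne' hA.ne']
      congr 1
      rw [hK1def]
      ring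
    have hθ₄ : Real.exp (K₂/2) = (A/B) ^ (q/2) := by
      rw [Real.rpow_def_of_pos (div_pos hA hB), Real.log_div hA.ne' hB.ne']
      congr 1
      rw [hK2def]
      ring
    have hψqbound1 : ∀ t ∈ Icc (0:ℝ) 1, |ψ t| ^ q ≤ L^q * (A^q * Real.exp (K₁ * t)) := by
      intro t ht
      have hle := Real.rpow_le_rpow (abs_nonneg _) (hψbound t ht) hq0.le
      refine hle.trans_eq ?_
      have hABe : A ^ (1-t) * B ^ t = A * Real.exp ((Real.log B - Real.log A) * t) := by
        rw [Real.rpow_def_of_pos hA, Real.rpow_def_of_pos hB, ← Real.exp_add]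
        nth_rewrite 2 [← Real.exp_log hA]
        rw [← Real.exp_add]
        congr 1
        ring
      rw [hABe, Real.mul_rpow hL.le (by positivity),
        Real.mul_rpow hA.le (Real.exp_nonneg _),
        Real.rpow_def_of_pos (Real.exp_pos _), Real.log_exp]
      rw [hK1def]
      ring_nf
    have hψqbound2 : ∀ t ∈ Icc (0:ℝ) 1, |ψ t| ^ q ≤ L^q * (B^q * Real.exp (K₂ * (1-t))) := by
      intro t ht
      have hle := Real.rpow_le_rpow (abs_nonneg _) (hψbound t ht) hq0.le
      refine hle.trans_eq ?_
      have hABe : A ^ (1-t) * B ^ t = B * Real.exp ((Real.log A - Real.log B) * (1-t)) := by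
        rw [Real.rpow_def_of_pos hA, Real.rpow_def_of_pos hB, ← Real.exp_add]
        nth_rewrite 2 [← Real.exp_log hB]
        rw [← Real.exp_add]
        congr 1
        ring
      rw [hABe, Real.mul_rpow hL.le (by positivity),
        Real.mul_rpow hB.le (Real.exp_nonneg _),
        Real.rpow_def_of_pos (Real.exp_pos _), Real.log_exp]
      rw [hK2def]
      ring_nf
    -- bound for the first term
    have hT1 : |∫ t in (0:ℝ)..(1/2), t * ψ t|
        ≤ 1/4 * L * ((q-1)/(2*q-1)) ^ (1-1/q) * (A * (g₂ ((B/A) ^ (q/2))) ^ (1/q)) := by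
      have hidmem : MemLp (fun t : ℝ => t) (ENNReal.ofReal p)
          (volume.restrict (Ioc (0:ℝ) (1/2))) := by
        refine MemLp.of_bound aestronglyMeasurable_id (1/2) ?_
        refine (ae_restrict_iff' measurableSet_Ioc).2 (Filter.Eventually.of_forall fun t ht => ?_)
        rw [Real.norm_eq_abs, abs_of_pos ht.1]
        exact ht.2
      have habsmem : MemLp (fun t => |ψ t|) (ENNReal.ofReal q)
          (volume.restrict (Ioc (0:ℝ) (1/2))) := by
        refine MemLp.of_bound (hψmeas hsub1).norm (L*b) ?_
        refine (ae_restrict_iff' measurableSet_Ioc).2 (Filter.Eventually.of_forall fun t ht => ?_)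
        rw [Real.norm_eq_abs, abs_abs]
        exact hψb1 t (hsub1 ht)
      have hHold : ∫ t in Ioc (0:ℝ) (1/2), t * |ψ t|
          ≤ (∫ t in Ioc (0:ℝ) (1/2), t ^ p) ^ (1/p) * (∫ t in Ioc (0:ℝ) (1/2), |ψ t| ^ q) ^ (1/q) :=
        MeasureTheory.integral_mul_le_Lp_mul_Lq_of_nonneg hpq
          ((ae_restrict_iff' measurableSet_Ioc).2 (Filter.Eventually.of_forall fun t ht => ht.1.le))
          (Filter.Eventually.of_forall fun t => abs_nonneg _) hidmem habsmem
      have hintpsiq : IntegrableOn (fun t => |ψ t| ^ q) (Ioc (0:ℝ) (1/2)) := by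
        refine Integrable.mono' (integrable_const ((L*b)^q))
          ((Real.continuous_rpow_const hq0.le).comp_aestronglyMeasurable (hψmeas hsub1).norm) ?_
        refine (ae_restrict_iff' measurableSet_Ioc).2 (Filter.Eventually.of_forall fun t ht => ?_)
        rw [Real.norm_eq_abs, abs_of_nonneg (Real.rpow_nonneg (abs_nonneg _) q)]
        exact Real.rpow_le_rpow (abs_nonneg _) (hψb1 t (hsub1 ht)) hq0.le
      have hcontM : Continuous (fun t : ℝ => L^q * (A^q * Real.exp (K₁ * t))) :=
        continuous_const.mul (continuous_const.mul
          (Real.continuous_exp.comp (continuous_const.mul continuous_id)))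
      have hm1 : ∫ t in Ioc (0:ℝ) (1/2), |ψ t| ^ q
          ≤ ∫ t in Ioc (0:ℝ) (1/2), L^q * (A^q * Real.exp (K₁ * t)) := by
        refine integral_mono_ae hintpsiq (hcontM.integrableOn_Ioc) ?_
        exact (ae_restrict_iff' measurableSet_Ioc).2
          (Filter.Eventually.of_forall fun t ht => hψqbound1 t (hsub1 ht))
      have hMval : ∫ t in Ioc (0:ℝ) (1/2), L^q * (A^q * Real.exp (K₁ * t))
          = L^q * (A^q * ((1/2) * g₂ ((B/A) ^ (q/2)))) := by
        rw [← intervalIntegral.integral_of_le (by norm_num : (0:ℝ) ≤ 1/2)]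
        rw [intervalIntegral.integral_const_mul]
        rw [show (∫ t in (0:ℝ)..(1/2), A^q * Real.exp (K₁ * t))
            = A^q * ∫ t in (0:ℝ)..(1/2), Real.exp (K₁ * t) from
          intervalIntegral.integral_const_mul _ _]
        rw [integral_exp_mul_half, hθ₃]
      have s1 : |∫ t in (0:ℝ)..(1/2), t * ψ t| ≤ ∫ t in (0:ℝ)..(1/2), |t * ψ t| :=
        intervalIntegral.abs_integral_le_integral_abs (by norm_num)
      have s2 : ∫ t in (0:ℝ)..(1/2), |t * ψ t| = ∫ t in Ioc (0:ℝ) (1/2), t * |ψ t| := by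
        rw [show (∫ t in (0:ℝ)..(1/2), |t * ψ t|) = ∫ t in (0:ℝ)..(1/2), t * |ψ t| from
          intervalIntegral.integral_congr (fun t ht => by
            rw [uIcc_of_le (by norm_num)] at ht
            rw [abs_mul, abs_of_nonneg ht.1])]
        exact intervalIntegral.integral_of_le (by norm_num)
      have s4 : (∫ t in Ioc (0:ℝ) (1/2), t ^ p) = (1/2:ℝ)^(p+1)/(p+1) := by
        rw [← intervalIntegral.integral_of_le (by norm_num : (0:ℝ) ≤ 1/2)]
        exact hCp
      have hG2 : 0 ≤ g₂ ((B/A) ^ (q/2)) := g2_nonneg (Real.rpow_nonneg (div_pos hB hA).le _)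
      calc |∫ t in (0:ℝ)..(1/2), t * ψ t|
          ≤ ∫ t in (0:ℝ)..(1/2), |t * ψ t| := s1
        _ = ∫ t in Ioc (0:ℝ) (1/2), t * |ψ t| := s2
        _ ≤ (∫ t in Ioc (0:ℝ) (1/2), t ^ p) ^ (1/p) *
              (∫ t in Ioc (0:ℝ) (1/2), |ψ t| ^ q) ^ (1/q) := hHold
        _ ≤ (∫ t in Ioc (0:ℝ) (1/2), t ^ p) ^ (1/p) *
              (L^q * (A^q * ((1/2) * g₂ ((B/A) ^ (q/2))))) ^ (1/q) := by
            refine mul_le_mul_of_nonneg_left ?_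
              (Real.rpow_nonneg (setIntegral_nonneg measurableSet_Ioc
                (fun t ht => Real.rpow_nonneg ht.1.le p)) _)
            · refine Real.rpow_le_rpow ?_ (hm1.trans_eq hMval) (by positivity)
              exact integral_nonneg (fun t => Real.rpow_nonneg (abs_nonneg _) q)
        _ = 1/4 * L * ((q-1)/(2*q-1)) ^ (1-1/q) * (A * (g₂ ((B/A) ^ (q/2))) ^ (1/q)) := by
            rw [s4]
            exact final_algebra hq hL hA hG2
    -- bound for the second term
    have hT2 : |∫ t in (1/2:ℝ)..1, (t - 1) * ψ t|
        ≤ 1/4 * L * ((q-1)/(2*q-1)) ^ (1-1/q) * (B * (g₂ ((A/B) ^ (q/2))) ^ (1/q)) := by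
      have hidmem : MemLp (fun t : ℝ => 1 - t) (ENNReal.ofReal p)
          (volume.restrict (Ioc (1/2:ℝ) 1)) := by
        refine MemLp.of_bound (aestronglyMeasurable_const.sub aestronglyMeasurable_id) (1/2) ?_
        refine (ae_restrict_iff' measurableSet_Ioc).2 (Filter.Eventually.of_forall fun t ht => ?_)
        rw [Real.norm_eq_abs, abs_of_nonneg (by linarith [ht.2] : (0:ℝ) ≤ 1 - t)]
        linarith [ht.1]
      have habsmem : MemLp (fun t => |ψ t|) (ENNReal.ofReal q)
          (volume.restrict (Ioc (1/2:ℝ) 1)) := by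
        refine MemLp.of_bound (hψmeas hsub2).norm (L*b) ?_
        refine (ae_restrict_iff' measurableSet_Ioc).2 (Filter.Eventually.of_forall fun t ht => ?_)
        rw [Real.norm_eq_abs, abs_abs]
        exact hψb1 t (hsub2 ht)
      have hHold : ∫ t in Ioc (1/2:ℝ) 1, (1 - t) * |ψ t|
          ≤ (∫ t in Ioc (1/2:ℝ) 1, (1 - t) ^ p) ^ (1/p) *
            (∫ t in Ioc (1/2:ℝ) 1, |ψ t| ^ q) ^ (1/q) :=
        MeasureTheory.integral_mul_le_Lp_mul_Lq_of_nonneg hpq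
          ((ae_restrict_iff' measurableSet_Ioc).2
            (Filter.Eventually.of_forall fun t ht => by
              show (0:ℝ) ≤ 1 - t
              linarith [ht.2]))
          (Filter.Eventually.of_forall fun t => abs_nonneg _) hidmem habsmem
      have hintpsiq : IntegrableOn (fun t => |ψ t| ^ q) (Ioc (1/2:ℝ) 1) := by
        refine Integrable.mono' (integrable_const ((L*b)^q))
          ((Real.continuous_rpow_const hq0.le).comp_aestronglyMeasurable (hψmeas hsub2).norm) ?_
        refine (ae_restrict_iff' measurableSet_Ioc).2 (Filter.Eventually.of_forall fun t ht => ?_)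
        rw [Real.norm_eq_abs, abs_of_nonneg (Real.rpow_nonneg (abs_nonneg _) q)]
        exact Real.rpow_le_rpow (abs_nonneg _) (hψb1 t (hsub2 ht)) hq0.le
      have hcontM : Continuous (fun t : ℝ => L^q * (B^q * Real.exp (K₂ * (1 - t)))) :=
        continuous_const.mul (continuous_const.mul
          (Real.continuous_exp.comp (continuous_const.mul (continuous_const.sub continuous_id))))
      have hm1 : ∫ t in Ioc (1/2:ℝ) 1, |ψ t| ^ q
          ≤ ∫ t in Ioc (1/2:ℝ) 1, L^q * (B^q * Real.exp (K₂ * (1 - t))) := by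
        refine integral_mono_ae hintpsiq (hcontM.integrableOn_Ioc) ?_
        exact (ae_restrict_iff' measurableSet_Ioc).2
          (Filter.Eventually.of_forall fun t ht => hψqbound2 t (hsub2 ht))
      have hMval : ∫ t in Ioc (1/2:ℝ) 1, L^q * (B^q * Real.exp (K₂ * (1 - t)))
          = L^q * (B^q * ((1/2) * g₂ ((A/B) ^ (q/2)))) := by
        rw [← intervalIntegral.integral_of_le (by norm_num : (1/2:ℝ) ≤ 1)]
        rw [intervalIntegral.integral_const_mul]
        rw [show (∫ t in (1/2:ℝ)..1, B^q * Real.exp (K₂ * (1 - t)))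
            = B^q * ∫ t in (1/2:ℝ)..1, Real.exp (K₂ * (1 - t)) from
          intervalIntegral.integral_const_mul _ _]
        have hflip : ∫ t in (1/2:ℝ)..1, Real.exp (K₂ * (1 - t))
            = ∫ u in (0:ℝ)..(1/2), Real.exp (K₂ * u) := by
          have := intervalIntegral.integral_comp_sub_left (a := (1/2:ℝ)) (b := 1)
            (fun u => Real.exp (K₂ * u)) 1
          norm_num at this
          exact this
        rw [hflip, integral_exp_mul_half, hθ₄]
      have s1 : |∫ t in (1/2:ℝ)..1, (t - 1) * ψ t| ≤ ∫ t in (1/2:ℝ)..1, |(t - 1) * ψ t| :=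
        intervalIntegral.abs_integral_le_integral_abs (by norm_num)
      have s2 : ∫ t in (1/2:ℝ)..1, |(t - 1) * ψ t| = ∫ t in Ioc (1/2:ℝ) 1, (1 - t) * |ψ t| := by
        rw [show (∫ t in (1/2:ℝ)..1, |(t - 1) * ψ t|) = ∫ t in (1/2:ℝ)..1, (1 - t) * |ψ t| from
          intervalIntegral.integral_congr (fun t ht => by
            rw [uIcc_of_le (by norm_num)] at ht
            rw [abs_mul, abs_of_nonpos (by linarith [ht.2] : t - 1 ≤ 0)]
            ring_nf)]
        exact intervalIntegral.integral_of_le (by norm_num)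
      have s4 : (∫ t in Ioc (1/2:ℝ) 1, (1 - t) ^ p) = (1/2:ℝ)^(p+1)/(p+1) := by
        rw [← intervalIntegral.integral_of_le (by norm_num : (1/2:ℝ) ≤ 1)]
        have hflip : ∫ t in (1/2:ℝ)..1, (1 - t) ^ p = ∫ u in (0:ℝ)..(1/2), u ^ p := by
          have := intervalIntegral.integral_comp_sub_left (a := (1/2:ℝ)) (b := 1)
            (fun u => u ^ p) 1
          norm_num at this
          exact this
        rw [hflip]
        exact hCp
      have hG2 : 0 ≤ g₂ ((A/B) ^ (q/2)) := g2_nonneg (Real.rpow_nonneg (div_pos hA hB).le _)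
      calc |∫ t in (1/2:ℝ)..1, (t - 1) * ψ t|
          ≤ ∫ t in (1/2:ℝ)..1, |(t - 1) * ψ t| := s1
        _ = ∫ t in Ioc (1/2:ℝ) 1, (1 - t) * |ψ t| := s2
        _ ≤ (∫ t in Ioc (1/2:ℝ) 1, (1 - t) ^ p) ^ (1/p) *
              (∫ t in Ioc (1/2:ℝ) 1, |ψ t| ^ q) ^ (1/q) := hHold
        _ ≤ (∫ t in Ioc (1/2:ℝ) 1, (1 - t) ^ p) ^ (1/p) *
              (L^q * (B^q * ((1/2) * g₂ ((A/B) ^ (q/2))))) ^ (1/q) := by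
            refine mul_le_mul_of_nonneg_left ?_
              (Real.rpow_nonneg (setIntegral_nonneg measurableSet_Ioc
                (fun t ht => Real.rpow_nonneg (by linarith [ht.2] : (0:ℝ) ≤ 1 - t) p)) _)
            · refine Real.rpow_le_rpow ?_ (hm1.trans_eq hMval) (by positivity)
              exact integral_nonneg (fun t => Real.rpow_nonneg (abs_nonneg _) q)
        _ = 1/4 * L * ((q-1)/(2*q-1)) ^ (1-1/q) * (B * (g₂ ((A/B) ^ (q/2))) ^ (1/q)) := by
            rw [s4]
            exact final_algebra hq hL hB hG2
    calc |f (Real.sqrt (a * b)) - (1/L) * ∫ x in a..b, f x / x|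
        = |(∫ t in (0:ℝ)..(1/2), t * ψ t) + ∫ t in (1/2:ℝ)..1, (t - 1) * ψ t| := hmain
      _ ≤ |∫ t in (0:ℝ)..(1/2), t * ψ t| + |∫ t in (1/2:ℝ)..1, (t - 1) * ψ t| := abs_add_le _ _
      _ ≤ 1/4 * L * ((q-1)/(2*q-1)) ^ (1-1/q) * (A * (g₂ ((B/A) ^ (q/2))) ^ (1/q))
          + 1/4 * L * ((q-1)/(2*q-1)) ^ (1-1/q) * (B * (g₂ ((A/B) ^ (q/2))) ^ (1/q)) :=
            add_le_add hT1 hT2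
      _ = (1/4) * Real.log (b/a) * ((q-1)/(2*q-1)) ^ (1-1/q) *
            (A * (g₂ ((B/A) ^ (q/2))) ^ (1/q) + B * (g₂ ((A/B) ^ (q/2))) ^ (1/q)) := by
            rw [hlogba]
            ring
end

section
/- Let f : I ⊆ (0,∞) → (0,∞) be differentiable on I°, let a, b ∈ I° with a < b, f' integrable on [a,b], and suppose |f'|^q is s-geometrically convex on [a,b] for some q > 1 and s ∈ (0,1]. If |f'(b)| ≤ 1 ≤ |f'(a)|, then |f(√(ab)) − (1/(ln b − ln a)) ∫_a^b f(x)/x dx| ≤ (1/4) ln(b/a) · ((q−1)/(2q−1))^{1−1/q} · [ a|f'(a)| g₂(θ₃)^{1/q} + b|f'(b)|^s |f'(a)|^{1−s} g₂(θ₄)^{1/q} ]. -/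
open Real MeasureTheory Set

set_option maxHeartbeats 2000000

lemma aux1 (s x : ℝ) (hs0 : 0 ≤ s) (hs1 : s ≤ 1) (hx0 : 0 ≤ x) : x ^ s ≤ 1 - s + s * x := by
  have := Real.geom_mean_le_arith_mean2_weighted hs0 (by linarith : (0:ℝ) ≤ 1 - s) hx0 zero_le_one
    (by ring)
  rw [Real.one_rpow, mul_one] at this
  linarith

lemma aux2 (s x : ℝ) (hs1 : s ≤ 1) (hx0 : 0 ≤ x) (hx1 : x ≤ 1) : s * x ≤ x ^ s := by
  rcases eq_or_lt_of_le hx0 with h|h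
  · rw [← h, mul_zero]
    positivity
  · calc s * x ≤ x := by nlinarith
    _ = x ^ (1:ℝ) := (Real.rpow_one x).symm
    _ ≤ x ^ s := Real.rpow_le_rpow_of_exponent_ge h hx1 hs1

lemma g₂_nonneg {u : ℝ} (hu : 0 < u) : 0 ≤ g₂ u := by
  unfold g₂; split_ifs with h
  · norm_num
  · rcases lt_or_gt_of_ne h with h1 | h1
    · exact div_nonneg_iff.2 (Or.inr ⟨by linarith, (Real.log_nonpos hu.le h1.le)⟩)
    · exact div_nonneg (by linarith) (Real.log_nonneg h1.le)

lemma g₂_exp (x : ℝ) : g₂ (Real.exp x) = if x = 0 then 1 else (Real.exp x - 1) / x := by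
  rcases eq_or_ne x 0 with rfl | hx
  · simp [g₂]
  · rw [if_neg hx]
    unfold g₂
    rw [if_neg (by rwa [Real.exp_eq_one_iff]), Real.log_exp]

lemma int_exp_rmul (c d r : ℝ) (hr : r ≠ 0) :
    ∫ u in c..d, Real.exp (r * u) = (Real.exp (r * d) - Real.exp (r * c)) / r := by
  have D : ∀ x ∈ uIcc c d, HasDerivAt (fun y => Real.exp (r * y) / r) (Real.exp (r * x)) x := by
    intro x _
    have h1 : HasDerivAt (fun y : ℝ => r * y) r x := by
      simpa using (hasDerivAt_id x).const_mul r
    have := (h1.exp).div_const r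
    simpa [mul_comm, mul_div_cancel_left₀ _ hr] using this
  have := intervalIntegral.integral_eq_sub_of_hasDerivAt D
    ((Real.continuous_exp.comp (continuous_const.mul continuous_id)).intervalIntegrable c d)
  rw [this]
  ring

lemma int_exp_left (c d r : ℝ) (hcd : c ≤ d) :
    ∫ u in Icc c d, Real.exp (r * (u - c)) = (d - c) * g₂ (Real.exp (r * (d - c))) := by
  rw [MeasureTheory.integral_Icc_eq_integral_Ioc, ← intervalIntegral.integral_of_le hcd, g₂_exp]
  rcases eq_or_ne r 0 with rfl | hr
  · simp
  rcases eq_or_lt_of_le hcd with rfl | h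
  · simp
  have hne : r * (d - c) ≠ 0 := mul_ne_zero hr (by linarith)
  rw [if_neg hne]
  have : ∀ u : ℝ, Real.exp (r * (u - c)) = Real.exp (-(r*c)) * Real.exp (r * u) := by
    intro u; rw [← Real.exp_add]; ring_nf
  simp_rw [this]
  rw [intervalIntegral.integral_const_mul, int_exp_rmul c d r hr]
  have h1 : Real.exp (-(r*c)) * Real.exp (r*c) = 1 := by rw [← Real.exp_add]; simp
  field_simp
  linear_combination (-1) * h1

lemma int_exp_right (c d r : ℝ) (hcd : c ≤ d) :
    ∫ u in Icc c d, Real.exp (r * (d - u)) = (d - c) * g₂ (Real.exp (r * (d - c))) := by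
  rw [MeasureTheory.integral_Icc_eq_integral_Ioc, ← intervalIntegral.integral_of_le hcd, g₂_exp]
  rcases eq_or_ne r 0 with rfl | hr
  · simp
  rcases eq_or_lt_of_le hcd with rfl | h
  · simp
  have hne : r * (d - c) ≠ 0 := mul_ne_zero hr (by linarith)
  rw [if_neg hne]
  have : ∀ u : ℝ, Real.exp (r * (d - u)) = Real.exp (r*d) * Real.exp (-r * u) := by
    intro u; rw [← Real.exp_add]; ring_nf
  simp_rw [this]
  rw [intervalIntegral.integral_const_mul, int_exp_rmul c d (-r) (neg_ne_zero.2 hr)]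
  have hX : Real.exp (-r*d) = Real.exp (-(r*d)) := by ring_nf
  have hY : Real.exp (-r*c) = Real.exp (-(r*c)) := by ring_nf
  have h1 : Real.exp (r*d) * Real.exp (-(r*d)) = 1 := by rw [← Real.exp_add]; simp
  rw [hX, hY, div_neg, mul_neg, neg_eq_iff_eq_neg]
  field_simp
  linear_combination h1

lemma int_pow_left (c d p : ℝ) (hcd : c ≤ d) (hp : 0 < p) :
    ∫ u in Icc c d, (u - c) ^ p = (d - c) ^ (p + 1) / (p + 1) := by
  rw [MeasureTheory.integral_Icc_eq_integral_Ioc, ← intervalIntegral.integral_of_le hcd]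
  rw [intervalIntegral.integral_comp_sub_right (fun x => x ^ p) c]
  rw [integral_rpow (Or.inl (by linarith))]
  rw [sub_self, Real.zero_rpow (by positivity)]
  ring

lemma int_pow_right (c d p : ℝ) (hcd : c ≤ d) (hp : 0 < p) :
    ∫ u in Icc c d, (d - u) ^ p = (d - c) ^ (p + 1) / (p + 1) := by
  rw [MeasureTheory.integral_Icc_eq_integral_Ioc, ← intervalIntegral.integral_of_le hcd]
  rw [intervalIntegral.integral_comp_sub_left (fun x => x ^ p) d]
  rw [integral_rpow (Or.inl (by linarith))]
  rw [sub_self, Real.zero_rpow (by positivity)]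
  ring

lemma holder_half (c d q p : ℝ) (hq : 1 < q) (hp : p = q/(q-1))
    (w φ g : ℝ → ℝ)
    (hw : ContinuousOn w (Icc c d)) (hw0 : ∀ u ∈ Icc c d, 0 ≤ w u)
    (hg : ContinuousOn g (Icc c d))
    (hφ : AEStronglyMeasurable φ (volume.restrict (Icc c d)))
    (hb : ∀ u ∈ Icc c d, |φ u| ^ q ≤ g u) :
    ∫ u in Icc c d, w u * |φ u| ≤
      (∫ u in Icc c d, w u ^ p) ^ (1/p) * (∫ u in Icc c d, g u) ^ (1/q) := by
  have hfin : IsFiniteMeasure (volume.restrict (Icc c d)) :=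
    ⟨by rw [Measure.restrict_apply_univ]; exact measure_Icc_lt_top⟩
  have hpq : p.HolderConjugate q := by
    rw [hp]; exact (Real.HolderConjugate.conjExponent hq).symm
  obtain ⟨Cw, hCw⟩ := (isCompact_Icc).exists_bound_of_continuousOn hw
  obtain ⟨Cg, hCg⟩ := (isCompact_Icc).exists_bound_of_continuousOn hg
  have hq0 : (0:ℝ) < q := by linarith
  have hφabs : AEStronglyMeasurable (fun u => |φ u|) (volume.restrict (Icc c d)) := by
    simpa [Real.norm_eq_abs] using hφ.norm
  have hwmem : MemLp w (ENNReal.ofReal p) (volume.restrict (Icc c d)) := by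
    refine MemLp.of_bound (hw.aestronglyMeasurable measurableSet_Icc) Cw ?_
    exact (ae_restrict_iff' measurableSet_Icc).2 (ae_of_all _ hCw)
  have hφmem : MemLp (fun u => |φ u|) (ENNReal.ofReal q) (volume.restrict (Icc c d)) := by
    refine MemLp.of_bound hφabs ((max Cg 0) ^ (1/q)) ?_
    refine (ae_restrict_iff' measurableSet_Icc).2 (ae_of_all _ fun u hu => ?_)
    rw [Real.norm_eq_abs, abs_abs]
    have h1 : |φ u| ^ q ≤ max Cg 0 := le_trans (hb u hu) (le_trans (le_abs_self _)
      (le_trans ((Real.norm_eq_abs _) ▸ hCg u hu) (le_max_left _ _)))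
    calc |φ u| = (|φ u| ^ q) ^ (1/q) := by
          rw [← Real.rpow_mul (abs_nonneg _), mul_one_div_cancel hq0.ne', Real.rpow_one]
      _ ≤ (max Cg 0) ^ (1/q) := Real.rpow_le_rpow (by positivity) h1 (by positivity)
  have key := MeasureTheory.integral_mul_le_Lp_mul_Lq_of_nonneg hpq
    ((ae_restrict_iff' measurableSet_Icc).2 (ae_of_all _ hw0))
    (ae_of_all _ (fun u => abs_nonneg (φ u))) hwmem hφmem
  refine le_trans key ?_
  have hmono : ∫ u in Icc c d, |φ u| ^ q ≤ ∫ u in Icc c d, g u := by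
    refine setIntegral_mono_on ?_ (hg.integrableOn_Icc) measurableSet_Icc hb
    have := hφmem.integrable_norm_rpow
      (by simp [ENNReal.ofReal_eq_zero, not_le, hq0]) (by simp)
    simpa [ENNReal.toReal_ofReal hq0.le, IntegrableOn] using this
  have h1 : (0:ℝ) ≤ ∫ u in Icc c d, w u ^ p := by
    refine integral_nonneg_of_ae ((ae_restrict_iff' measurableSet_Icc).2 (ae_of_all _ ?_))
    intro u hu; exact Real.rpow_nonneg (hw0 u hu) p
  refine mul_le_mul_of_nonneg_left
    (Real.rpow_le_rpow (integral_nonneg fun u => by positivity) hmono (by positivity))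
    (Real.rpow_nonneg h1 _)

theorem stmt_17
    (I : Set ℝ) (hI : I.OrdConnected) (hIpos : I ⊆ Set.Ioi (0:ℝ))
    (f f' : ℝ → ℝ) (hfpos : ∀ x ∈ I, 0 < f x)
    (a b : ℝ) (ha : a ∈ interior I) (hb : b ∈ interior I) (hab : a < b)
    (hdiff : ∀ x ∈ interior I, HasDerivAt f (f' x) x)
    (hint : IntervalIntegrable f' volume a b)
    (q s : ℝ) (hq : 1 < q) (hs : s ∈ Set.Ioc (0:ℝ) 1)
    (hconv : SGeometricallyConvexOn s (Set.Icc a b) (fun x => |f' x| ^ q))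
    (hfb : |f' b| ≤ 1) (hfa : 1 ≤ |f' a|) :
    |f (Real.sqrt (a * b)) - (1 / (Real.log b - Real.log a)) * ∫ x in a..b, f x / x| ≤
      (1 / 4 : ℝ) * Real.log (b / a) * ((q - 1) / (2 * q - 1)) ^ (1 - 1 / q) *
        (a * |f' a| * (g₂ ((b * |f' b| ^ s / (a * |f' a| ^ s)) ^ (q / 2))) ^ (1 / q)
         + b * |f' b| ^ s * |f' a| ^ (1 - s) * (g₂ ((a * |f' a| ^ s / (b * |f' b| ^ s)) ^ (q / 2))) ^ (1 / q)) := by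
  obtain ⟨hs0, hs1⟩ := hs
  have hIcc : Icc a b ⊆ interior I := (hI.interior).out ha hb
  have ha0 : 0 < a := hIpos (interior_subset ha)
  have hb0 : 0 < b := hIpos (interior_subset hb)
  have hq0 : (0:ℝ) < q := by linarith
  -- degenerate case |f' b| = 0 is impossible
  rcases eq_or_lt_of_le (abs_nonneg (f' b)) with hβ0 | hβ0
  · exfalso
    have hzero : ∀ x ∈ Ioo a b, f' x = 0 := by
      intro x hx
      have hx0 : 0 < x := lt_trans ha0 hx.1
      set t := (Real.log b - Real.log x) / (Real.log b - Real.log a) with ht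
      have hlab : Real.log a < Real.log b := Real.log_lt_log ha0 hab
      have hxa : Real.log a < Real.log x := Real.log_lt_log ha0 hx.1
      have hxb : Real.log x < Real.log b := Real.log_lt_log hx0 hx.2
      have ht0 : 0 < t := div_pos (by linarith) (by linarith)
      have ht1 : t < 1 := (div_lt_one (by linarith)).2 (by linarith)
      have hxeq : a ^ t * b ^ (1 - t) = x := by
        rw [Real.rpow_def_of_pos ha0, Real.rpow_def_of_pos hb0, ← Real.exp_add,
          ← Real.exp_log hx0]
        congr 1
        have h9 : Real.log b - Real.log a ≠ 0 := by linarith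
        have key : (Real.log a * t + Real.log b * (1 - t)) * (Real.log b - Real.log a)
            = Real.log x * (Real.log b - Real.log a) := by
          rw [ht]
          field_simp
          ring
        exact mul_right_cancel₀ h9 key
      have hcv := hconv a ⟨le_rfl, hab.le⟩ b ⟨hab.le, le_rfl⟩ t ⟨ht0.le, ht1.le⟩
      dsimp only at hcv
      rw [hxeq, ← hβ0, Real.zero_rpow hq0.ne',
        Real.zero_rpow (Real.rpow_pos_of_pos (by linarith) s).ne', mul_zero] at hcv
      have h4 : (0:ℝ) ≤ |f' x| ^ q := Real.rpow_nonneg (abs_nonneg _) q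
      have h5 : |f' x| ^ q = 0 := le_antisymm hcv h4
      rw [Real.rpow_eq_zero (abs_nonneg _) hq0.ne'] at h5
      exact abs_eq_zero.1 h5
    have hconst : ∀ x ∈ Ioo a b, ∀ y ∈ Ioo a b, x ≤ y → f y = f x := by
      intro x hx y hy hxy
      have hsub : Icc x y ⊆ Ioo a b := fun z hz => ⟨lt_of_lt_of_le hx.1 hz.1,
        lt_of_le_of_lt hz.2 hy.2⟩
      have hcont : ContinuousOn f (Icc x y) := fun z hz =>
        ((hdiff z (hIcc (Ioo_subset_Icc_self (hsub hz)))).continuousAt).continuousWithinAt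
      have hder : ∀ z ∈ Ico x y, HasDerivWithinAt f 0 (Ici z) z := by
        intro z hz
        have hzi : z ∈ Ioo a b := hsub ⟨hz.1, hz.2.le⟩
        have h := hdiff z (hIcc (Ioo_subset_Icc_self hzi))
        rw [hzero z hzi] at h
        exact h.hasDerivWithinAt
      exact constant_of_has_deriv_right_zero hcont hder y ⟨hxy, le_rfl⟩
    set κ := f ((a+b)/2) with hκ
    have hmid : (a+b)/2 ∈ Ioo a b := ⟨by linarith, by linarith⟩
    have hfeq : ∀ x ∈ Ioo a b, f x = κ := by
      intro x hx
      rcases le_total x ((a+b)/2) with h | h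
      · exact (hconst x hx _ hmid h).symm
      · exact hconst _ hmid x hx h
    have hda : HasDerivAt f (f' a) a := hdiff a ha
    have hfa0 : f a = κ := by
      have h1 : Filter.Tendsto f (nhdsWithin a (Ioi a)) (nhds (f a)) :=
        (hda.continuousAt.continuousWithinAt)
      have h2 : f =ᶠ[nhdsWithin a (Ioi a)] fun _ => κ := by
        filter_upwards [Ioo_mem_nhdsGT_of_mem (⟨le_rfl, hab⟩ : a ∈ Ico a b)] with x hx
        exact hfeq x hx
      have h3 : Filter.Tendsto f (nhdsWithin a (Ioi a)) (nhds κ) := by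
        rw [Filter.tendsto_congr' h2]; exact tendsto_const_nhds
      exact tendsto_nhds_unique h1 h3
    have hd0 : HasDerivWithinAt f 0 (Ici a) a := by
      have hcg : HasDerivWithinAt (fun _ : ℝ => κ) 0 (Ici a) a :=
        (hasDerivAt_const a κ).hasDerivWithinAt
      refine hcg.congr_of_eventuallyEq ?_ hfa0
      filter_upwards [Ico_mem_nhdsGE_of_mem (⟨le_rfl, hab⟩ : a ∈ Ico a b)] with x hx
      rcases eq_or_lt_of_le hx.1 with rfl | h
      · exact hfa0
      · exact hfeq x ⟨h, hx.2⟩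
    have h1 : f' a = 0 := by
      have e1 := (hda.hasDerivWithinAt (s := Ici a)).derivWithin ((uniqueDiffOn_Ici a) a self_mem_Ici)
      have e2 := hd0.derivWithin ((uniqueDiffOn_Ici a) a self_mem_Ici)
      rw [e1] at e2
      exact e2
    rw [h1, abs_zero] at hfa
    linarith
  -- MAIN CASE
  · set α := |f' a| with hαdef
    set β := |f' b| with hβdef
    have hα0 : (0:ℝ) < α := lt_of_lt_of_le one_pos hfa
    have hlogα : 0 ≤ Real.log α := Real.log_nonneg hfa
    have hlogβ : Real.log β ≤ 0 := Real.log_nonpos hβ0.le hfb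
    set A := Real.log a with hAdef
    set B := Real.log b with hBdef
    have hABlt : A < B := Real.log_lt_log ha0 hab
    set L := B - A with hLdef
    have hL0 : 0 < L := sub_pos.2 hABlt
    set m := (A + B)/2 with hmdef
    have hAm : A ≤ m := by rw [hmdef]; linarith
    have hmB : m ≤ B := by rw [hmdef]; linarith
    have hmA : m - A = L/2 := by rw [hmdef, hLdef]; ring
    have hBm : B - m = L/2 := by rw [hmdef, hLdef]; ring
    set φ : ℝ → ℝ := fun u => Real.exp u * f' (Real.exp u) with hφdef
    have hmemIcc : ∀ u ∈ Icc A B, Real.exp u ∈ Icc a b := by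
      intro u hu
      constructor
      · calc a = Real.exp A := (Real.exp_log ha0).symm
          _ ≤ Real.exp u := Real.exp_le_exp.2 hu.1
      · calc Real.exp u ≤ Real.exp B := Real.exp_le_exp.2 hu.2
          _ = b := Real.exp_log hb0
    have hFD : ∀ u ∈ Icc A B, HasDerivAt (fun v => f (Real.exp v)) (φ u) u := by
      intro u hu
      have h1 := (hdiff _ (hIcc (hmemIcc u hu))).comp u (Real.hasDerivAt_exp u)
      simpa [hφdef, Function.comp_def, mul_comm] using h1
    have hinj : InjOn Real.exp (Icc A B) := Real.exp_injective.injOn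
    have himg : Real.exp '' (Icc A B) = Icc a b := by
      ext y
      constructor
      · rintro ⟨u, hu, rfl⟩; exact hmemIcc u hu
      · intro hy
        have hy0 : 0 < y := lt_of_lt_of_le ha0 hy.1
        exact ⟨Real.log y, ⟨Real.log_le_log ha0 hy.1, Real.log_le_log hy0 hy.2⟩,
          Real.exp_log hy0⟩
    have hφint : IntegrableOn φ (Icc A B) := by
      have h0 : IntegrableOn f' (Icc a b) := by
        rw [integrableOn_Icc_iff_integrableOn_Ioc]
        exact hint.1
      rw [← himg] at h0
      have h2 := (integrableOn_image_iff_integrableOn_abs_deriv_smul measurableSet_Icc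
        (fun u _ => (Real.hasDerivAt_exp u).hasDerivWithinAt) hinj f').mp h0
      refine h2.congr_fun ?_ measurableSet_Icc
      intro x _
      simp [hφdef, abs_of_pos (Real.exp_pos x), smul_eq_mul]
    have hFc : ContinuousOn (fun v => f (Real.exp v)) (Icc A B) :=
      fun u hu => ((hFD u hu).continuousAt).continuousWithinAt
    have hφI1 : IntervalIntegrable φ volume A m :=
      (intervalIntegrable_iff_integrableOn_Icc_of_le hAm).2
        (hφint.mono_set (Icc_subset_Icc le_rfl hmB))
    have hφI2 : IntervalIntegrable φ volume m B :=
      (intervalIntegrable_iff_integrableOn_Icc_of_le hmB).2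
        (hφint.mono_set (Icc_subset_Icc hAm le_rfl))
    have hFI1 : IntervalIntegrable (fun v => f (Real.exp v)) volume A m :=
      (hFc.mono (Icc_subset_Icc le_rfl hmB)).intervalIntegrable_of_Icc hAm
    have hFI2 : IntervalIntegrable (fun v => f (Real.exp v)) volume m B :=
      (hFc.mono (Icc_subset_Icc hAm le_rfl)).intervalIntegrable_of_Icc hmB
    have hIBP1 : ∫ u in A..m, (u - A) * φ u
        = (m - A) * f (Real.exp m) - (A - A) * f (Real.exp A)
          - ∫ u in A..m, 1 * f (Real.exp u) := by
      refine intervalIntegral.integral_mul_deriv_eq_deriv_mul (u := fun x => x - A)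
        (u' := fun _ => (1:ℝ)) (v := fun v => f (Real.exp v)) (v' := φ)
        (fun x _ => ?_) (fun x hx => ?_) intervalIntegrable_const hφI1
      · simpa using (hasDerivAt_id x).sub_const A
      · refine hFD x ?_
        rw [uIcc_of_le hAm] at hx
        exact Icc_subset_Icc le_rfl hmB hx
    have hIBP2 : ∫ u in m..B, (u - B) * φ u
        = (B - B) * f (Real.exp B) - (m - B) * f (Real.exp m)
          - ∫ u in m..B, 1 * f (Real.exp u) := by
      refine intervalIntegral.integral_mul_deriv_eq_deriv_mul (u := fun x => x - B)
        (u' := fun _ => (1:ℝ)) (v := fun v => f (Real.exp v)) (v' := φ)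
        (fun x _ => ?_) (fun x hx => ?_) intervalIntegrable_const hφI2
      · simpa using (hasDerivAt_id x).sub_const B
      · refine hFD x ?_
        rw [uIcc_of_le hmB] at hx
        exact Icc_subset_Icc hAm le_rfl hx
    have hadd : (∫ u in A..m, f (Real.exp u)) + ∫ u in m..B, f (Real.exp u)
        = ∫ u in A..B, f (Real.exp u) :=
      intervalIntegral.integral_add_adjacent_intervals hFI1 hFI2
    have hchg : ∫ x in a..b, f x / x = ∫ u in A..B, f (Real.exp u) := by
      rw [intervalIntegral.integral_of_le hab.le, intervalIntegral.integral_of_le hABlt.le,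
        ← MeasureTheory.integral_Icc_eq_integral_Ioc, ← MeasureTheory.integral_Icc_eq_integral_Ioc,
        ← himg, integral_image_eq_integral_abs_deriv_smul measurableSet_Icc
          (fun u _ => (Real.hasDerivAt_exp u).hasDerivWithinAt) hinj]
      refine setIntegral_congr_fun measurableSet_Icc fun u _ => ?_
      have h := (Real.exp_pos u).ne'
      rw [abs_of_pos (Real.exp_pos u), smul_eq_mul]
      field_simp
    have hsq : Real.sqrt (a * b) = Real.exp m := by
      rw [← Real.exp_log (Real.sqrt_pos.2 (by positivity)), Real.log_sqrt (by positivity),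
        Real.log_mul ha0.ne' hb0.ne', hmdef]
    have hLba : Real.log (b/a) = L := by
      rw [Real.log_div hb0.ne' ha0.ne']
    have htot : f (Real.sqrt (a * b)) - (1 / L) * ∫ x in a..b, f x / x
        = (1/L) * ((∫ u in A..m, (u - A) * φ u) + ∫ u in m..B, (u - B) * φ u) := by
      rw [hchg, hsq, hIBP1, hIBP2, ← hadd]
      simp only [one_mul]
      field_simp
      ring
    -- exponents and constants
    set p := q / (q - 1) with hpdef
    have hp1 : 1 < p := by
      rw [hpdef, lt_div_iff₀ (by linarith)]
      linarith
    set D₁ := B + s * Real.log β - A - s * Real.log α with hD₁def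
    set r₁ := q * D₁ / L with hr₁def
    set D₂ := A + s * Real.log α - B - s * Real.log β with hD₂def
    set r₂ := q * D₂ / L with hr₂def
    have hβs : (0:ℝ) < β ^ s := Real.rpow_pos_of_pos hβ0 s
    have hαs : (0:ℝ) < α ^ s := Real.rpow_pos_of_pos hα0 s
    have hθ₃pos : (0:ℝ) < (b * β ^ s / (a * α ^ s)) ^ (q / 2) :=
      Real.rpow_pos_of_pos (div_pos (mul_pos hb0 hβs) (mul_pos ha0 hαs)) _
    have hθ₄pos : (0:ℝ) < (a * α ^ s / (b * β ^ s)) ^ (q / 2) :=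
      Real.rpow_pos_of_pos (div_pos (mul_pos ha0 hαs) (mul_pos hb0 hβs)) _
    have hθ₃ : Real.exp (r₁ * (L/2)) = (b * β ^ s / (a * α ^ s)) ^ (q / 2) := by
      rw [Real.rpow_def_of_pos (div_pos (mul_pos hb0 hβs) (mul_pos ha0 hαs))]
      congr 1
      rw [Real.log_div (mul_pos hb0 hβs).ne' (mul_pos ha0 hαs).ne',
        Real.log_mul hb0.ne' hβs.ne', Real.log_mul ha0.ne' hαs.ne',
        Real.log_rpow hβ0, Real.log_rpow hα0, hr₁def, hD₁def, hAdef, hBdef]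
      field_simp
      ring
    have hθ₄ : Real.exp (r₂ * (L/2)) = (a * α ^ s / (b * β ^ s)) ^ (q / 2) := by
      rw [Real.rpow_def_of_pos (div_pos (mul_pos ha0 hαs) (mul_pos hb0 hβs))]
      congr 1
      rw [Real.log_div (mul_pos ha0 hαs).ne' (mul_pos hb0 hβs).ne',
        Real.log_mul ha0.ne' hαs.ne', Real.log_mul hb0.ne' hβs.ne',
        Real.log_rpow hα0, Real.log_rpow hβ0, hr₂def, hD₂def, hAdef, hBdef]
      field_simp
      ring
    -- pointwise bounds
    have hpt1 : ∀ u ∈ Icc A m, |φ u| ^ q ≤ (a ^ q * α ^ q) * Real.exp (r₁ * (u - A)) := by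
      intro u hu
      set t := (u - A) / L with htdef
      have ht0 : 0 ≤ t := div_nonneg (by linarith [hu.1]) hL0.le
      have ht1 : t ≤ 1 := by
        rw [htdef, div_le_one hL0]
        have h1 := hu.2
        rw [hmdef] at h1
        rw [hLdef]
        linarith
      have hexpu : Real.exp u = b ^ t * a ^ (1 - t) := by
        rw [Real.rpow_def_of_pos hb0, Real.rpow_def_of_pos ha0, ← Real.exp_add]
        congr 1
        rw [htdef]
        field_simp
        ring
      have hcv := hconv b ⟨hab.le, le_rfl⟩ a ⟨le_rfl, hab.le⟩ t ⟨ht0, ht1⟩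
      dsimp only at hcv
      rw [← hexpu] at hcv
      have h2 : |φ u| ^ q = Real.exp (u*q) * |f' (Real.exp u)| ^ q := by
        rw [hφdef]
        dsimp only
        rw [abs_mul, abs_of_pos (Real.exp_pos u),
          Real.mul_rpow (Real.exp_pos u).le (abs_nonneg _), ← Real.exp_mul]
      have hsxt : s * t ≤ t ^ s := aux2 s t hs1 ht0 ht1
      have h1t : (1 - t) ^ s ≤ 1 - s * t := by
        have h := aux1 s (1 - t) hs0.le hs1 (by linarith)
        linarith
      have e1 : (β ^ q) ^ (t ^ s) = Real.exp ((Real.log β * q) * t ^ s) := by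
        rw [Real.rpow_def_of_pos hβ0, ← Real.exp_mul]
      have e2 : (α ^ q) ^ ((1-t) ^ s) = Real.exp ((Real.log α * q) * (1-t) ^ s) := by
        rw [Real.rpow_def_of_pos hα0, ← Real.exp_mul]
      calc |φ u| ^ q = Real.exp (u*q) * |f' (Real.exp u)| ^ q := h2
        _ ≤ Real.exp (u*q) * ((β ^ q) ^ (t ^ s) * (α ^ q) ^ ((1-t) ^ s)) :=
            mul_le_mul_of_nonneg_left hcv (Real.exp_pos _).le
        _ = Real.exp (u*q + ((Real.log β * q) * t ^ s + (Real.log α * q) * (1-t) ^ s)) := by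
            rw [e1, e2, ← Real.exp_add, ← Real.exp_add]
        _ ≤ Real.exp (u*q + ((Real.log β * q) * (s*t) + (Real.log α * q) * (1-s*t))) := by
            apply Real.exp_le_exp.2
            have hb1 : (Real.log β * q) * t ^ s ≤ (Real.log β * q) * (s*t) := by
              apply mul_le_mul_of_nonpos_left hsxt
              exact mul_nonpos_of_nonpos_of_nonneg hlogβ hq0.le
            have hb2 : (Real.log α * q) * (1-t) ^ s ≤ (Real.log α * q) * (1-s*t) := by
              apply mul_le_mul_of_nonneg_left h1t
              exact mul_nonneg hlogα hq0.le
            linarith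
        _ = (a ^ q * α ^ q) * Real.exp (r₁ * (u - A)) := by
            rw [Real.rpow_def_of_pos ha0, Real.rpow_def_of_pos hα0, ← Real.exp_add,
              ← Real.exp_add]
            congr 1
            rw [htdef, hr₁def, hD₁def, hLdef, ← hAdef]
            have hBA : B - A ≠ 0 := by linarith
            field_simp
            ring
    have hpt2 : ∀ u ∈ Icc m B,
        |φ u| ^ q ≤ (b ^ q * β ^ (q*s) * α ^ (q*(1-s))) * Real.exp (r₂ * (B - u)) := by
      intro u hu
      set τ := (B - u) / L with hτdef
      have ht0 : 0 ≤ τ := div_nonneg (by linarith [hu.2]) hL0.le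
      have ht1 : τ ≤ 1 := by
        rw [hτdef, div_le_one hL0]
        have h1 := hu.1
        rw [hmdef] at h1
        rw [hLdef]
        linarith
      have hexpu : Real.exp u = a ^ τ * b ^ (1 - τ) := by
        rw [Real.rpow_def_of_pos ha0, Real.rpow_def_of_pos hb0, ← Real.exp_add]
        congr 1
        rw [hτdef]
        field_simp
        ring
      have hcv := hconv a ⟨le_rfl, hab.le⟩ b ⟨hab.le, le_rfl⟩ τ ⟨ht0, ht1⟩
      dsimp only at hcv
      rw [← hexpu] at hcv
      have h2 : |φ u| ^ q = Real.exp (u*q) * |f' (Real.exp u)| ^ q := by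
        rw [hφdef]
        dsimp only
        rw [abs_mul, abs_of_pos (Real.exp_pos u),
          Real.mul_rpow (Real.exp_pos u).le (abs_nonneg _), ← Real.exp_mul]
      have hsxt : s * (1-τ) ≤ (1-τ) ^ s := aux2 s (1-τ) hs1 (by linarith) (by linarith)
      have h1t : τ ^ s ≤ 1 - s + s * τ := aux1 s τ hs0.le hs1 ht0
      have e1 : (α ^ q) ^ (τ ^ s) = Real.exp ((Real.log α * q) * τ ^ s) := by
        rw [Real.rpow_def_of_pos hα0, ← Real.exp_mul]
      have e2 : (β ^ q) ^ ((1-τ) ^ s) = Real.exp ((Real.log β * q) * (1-τ) ^ s) := by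
        rw [Real.rpow_def_of_pos hβ0, ← Real.exp_mul]
      calc |φ u| ^ q = Real.exp (u*q) * |f' (Real.exp u)| ^ q := h2
        _ ≤ Real.exp (u*q) * ((α ^ q) ^ (τ ^ s) * (β ^ q) ^ ((1-τ) ^ s)) :=
            mul_le_mul_of_nonneg_left hcv (Real.exp_pos _).le
        _ = Real.exp (u*q + ((Real.log α * q) * τ ^ s + (Real.log β * q) * (1-τ) ^ s)) := by
            rw [e1, e2, ← Real.exp_add, ← Real.exp_add]
        _ ≤ Real.exp (u*q + ((Real.log α * q) * (1 - s + s*τ) + (Real.log β * q) * (s*(1-τ)))) := by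
            apply Real.exp_le_exp.2
            have hb1 : (Real.log α * q) * τ ^ s ≤ (Real.log α * q) * (1 - s + s*τ) := by
              apply mul_le_mul_of_nonneg_left h1t
              exact mul_nonneg hlogα hq0.le
            have hb2 : (Real.log β * q) * (1-τ) ^ s ≤ (Real.log β * q) * (s*(1-τ)) := by
              apply mul_le_mul_of_nonpos_left hsxt
              exact mul_nonpos_of_nonpos_of_nonneg hlogβ hq0.le
            linarith
        _ = (b ^ q * β ^ (q*s) * α ^ (q*(1-s))) * Real.exp (r₂ * (B - u)) := by
            rw [Real.rpow_def_of_pos hb0, Real.rpow_def_of_pos hβ0,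
              Real.rpow_def_of_pos hα0, ← Real.exp_add, ← Real.exp_add, ← Real.exp_add]
            congr 1
            rw [hτdef, hr₂def, hD₂def, hLdef, ← hBdef]
            have hBA : B - A ≠ 0 := by linarith
            field_simp
            ring
    -- Hölder applications
    have hmeas1 : AEStronglyMeasurable φ (volume.restrict (Icc A m)) :=
      (hφint.mono_set (Icc_subset_Icc le_rfl hmB)).aestronglyMeasurable
    have hmeas2 : AEStronglyMeasurable φ (volume.restrict (Icc m B)) :=
      (hφint.mono_set (Icc_subset_Icc hAm le_rfl)).aestronglyMeasurable
    have hh1 := holder_half A m q p hq hpdef (fun u => u - A) φ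
      (fun u => (a ^ q * α ^ q) * Real.exp (r₁ * (u - A)))
      (Continuous.continuousOn (by fun_prop)) (fun u hu => sub_nonneg.2 hu.1)
      (Continuous.continuousOn (by fun_prop)) hmeas1 hpt1
    have hh2 := holder_half m B q p hq hpdef (fun u => B - u) φ
      (fun u => (b ^ q * β ^ (q*s) * α ^ (q*(1-s))) * Real.exp (r₂ * (B - u)))
      (Continuous.continuousOn (by fun_prop)) (fun u hu => sub_nonneg.2 hu.2)
      (Continuous.continuousOn (by fun_prop)) hmeas2 hpt2
    have hi1 : ∫ u in Icc A m, (u - A) ^ p = (L/2) ^ (p+1) / (p+1) := by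
      rw [int_pow_left A m p hAm (by linarith), hmA]
    have hi2 : ∫ u in Icc A m, (a ^ q * α ^ q) * Real.exp (r₁ * (u - A))
        = (a ^ q * α ^ q) * ((L/2) * g₂ (Real.exp (r₁ * (L/2)))) := by
      rw [MeasureTheory.integral_const_mul, int_exp_left A m r₁ hAm, hmA]
    have hi3 : ∫ u in Icc m B, (B - u) ^ p = (L/2) ^ (p+1) / (p+1) := by
      rw [int_pow_right m B p hmB (by linarith), hBm]
    have hi4 : ∫ u in Icc m B, (b ^ q * β ^ (q*s) * α ^ (q*(1-s))) * Real.exp (r₂ * (B - u))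
        = (b ^ q * β ^ (q*s) * α ^ (q*(1-s))) * ((L/2) * g₂ (Real.exp (r₂ * (L/2)))) := by
      rw [MeasureTheory.integral_const_mul, int_exp_right m B r₂ hmB, hBm]
    have hG₃ : 0 ≤ g₂ ((b * β ^ s / (a * α ^ s)) ^ (q / 2)) := g₂_nonneg hθ₃pos
    have hG₄ : 0 ≤ g₂ ((a * α ^ s / (b * β ^ s)) ^ (q / 2)) := g₂_nonneg hθ₄pos
    have hK1 : a ^ q * α ^ q = (a * α) ^ q := (Real.mul_rpow ha0.le hα0.le).symm
    have hK2 : b ^ q * β ^ (q*s) * α ^ (q*(1-s)) = (b * β ^ s * α ^ (1-s)) ^ q := by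
      rw [Real.mul_rpow (mul_pos hb0 hβs).le (Real.rpow_pos_of_pos hα0 (1-s)).le,
        Real.mul_rpow hb0.le hβs.le, ← Real.rpow_mul hβ0.le, ← Real.rpow_mul hα0.le,
        mul_comm s q, mul_comm (1-s) q]
    -- algebraic normalisation of the Hölder bound
    have hl2 : (0:ℝ) < L/2 := by linarith
    have hp0 : (0:ℝ) < p := by linarith
    have hp1' : (0:ℝ) < p + 1 := by linarith
    have h1p : 1/p = 1 - 1/q := by
      rw [hpdef]
      field_simp
    have hpp : 1/(p+1) = (q-1)/(2*q-1) := by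
      rw [hpdef]
      rw [div_add' _ _ _ (by linarith : q - 1 ≠ 0)]
      rw [one_div_div]
      congr 1
      ring
    have hexp2 : (p+1)*(1/p) + 1/q = 2 := by
      have e : (p+1)*(1/p) = 1 + (1 - 1/q) := by
        rw [add_mul, one_mul, mul_one_div, div_self hp0.ne', h1p]
      rw [e]
      ring
    have halg : ∀ X G : ℝ, 0 < X → 0 ≤ G →
        ((L/2) ^ (p+1) / (p+1)) ^ (1/p) * (X ^ q * ((L/2) * G)) ^ (1/q)
        = (L/2)*(L/2) * (((q - 1) / (2 * q - 1)) ^ (1 - 1/q)) * (X * G ^ (1/q)) := by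
      intro X G hX hG
      have e1 : ((L/2) ^ (p+1) / (p+1)) ^ (1/p)
          = (L/2) ^ ((p+1)*(1/p)) * (((q - 1) / (2 * q - 1)) ^ (1 - 1/q)) := by
        rw [div_eq_mul_inv, ← one_div,
          Real.mul_rpow (Real.rpow_nonneg hl2.le _) (by positivity),
          ← Real.rpow_mul hl2.le, hpp, h1p]
      have e2 : (X ^ q * ((L/2) * G)) ^ (1/q)
          = X * ((L/2) ^ (1/q) * G ^ (1/q)) := by
        rw [Real.mul_rpow (Real.rpow_nonneg hX.le _) (by positivity),
          Real.mul_rpow hl2.le hG, ← Real.rpow_mul hX.le,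
          mul_one_div_cancel hq0.ne', Real.rpow_one]
      rw [e1, e2]
      have e3 : (L/2) ^ ((p+1)*(1/p)) * (L/2) ^ (1/q) = (L/2)*(L/2) := by
        rw [← Real.rpow_add hl2, hexp2]
        rw [show (2:ℝ) = ((2:ℕ):ℝ) by norm_num, Real.rpow_natCast]
        ring
      calc (L/2) ^ ((p+1)*(1/p)) * ((q - 1) / (2 * q - 1)) ^ (1 - 1/q)
            * (X * ((L/2) ^ (1/q) * G ^ (1/q)))
          = ((L/2) ^ ((p+1)*(1/p)) * (L/2) ^ (1/q)) * ((q - 1) / (2 * q - 1)) ^ (1 - 1/q)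
            * (X * G ^ (1/q)) := by ring
        _ = (L/2)*(L/2) * (((q - 1) / (2 * q - 1)) ^ (1 - 1/q)) * (X * G ^ (1/q)) := by
            rw [e3]
    have hbound1 : ∫ u in Icc A m, (u - A) * |φ u|
        ≤ (L/2)*(L/2) * (((q - 1) / (2 * q - 1)) ^ (1 - 1/q))
          * (a * α * (g₂ ((b * β ^ s / (a * α ^ s)) ^ (q / 2))) ^ (1/q)) := by
      refine le_trans hh1 ?_
      rw [hi1, hi2, hθ₃, hK1, halg (a*α) _ (mul_pos ha0 hα0) hG₃]
    have hbound2 : ∫ u in Icc m B, (B - u) * |φ u|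
        ≤ (L/2)*(L/2) * (((q - 1) / (2 * q - 1)) ^ (1 - 1/q))
          * (b * β ^ s * α ^ (1-s) * (g₂ ((a * α ^ s / (b * β ^ s)) ^ (q / 2))) ^ (1/q)) := by
      refine le_trans hh2 ?_
      rw [hi3, hi4, hθ₄, hK2,
        halg (b * β ^ s * α ^ (1-s)) _
          (mul_pos (mul_pos hb0 hβs) (Real.rpow_pos_of_pos hα0 (1-s))) hG₄]
    have habs1 : |∫ u in A..m, (u - A) * φ u| ≤ ∫ u in Icc A m, (u - A) * |φ u| := by
      refine le_trans (intervalIntegral.abs_integral_le_integral_abs hAm) ?_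
      rw [intervalIntegral.integral_of_le hAm, ← MeasureTheory.integral_Icc_eq_integral_Ioc]
      refine le_of_eq (setIntegral_congr_fun measurableSet_Icc fun u hu => ?_)
      rw [abs_mul, abs_of_nonneg (by linarith [hu.1] : (0:ℝ) ≤ u - A)]
    have habs2 : |∫ u in m..B, (u - B) * φ u| ≤ ∫ u in Icc m B, (B - u) * |φ u| := by
      refine le_trans (intervalIntegral.abs_integral_le_integral_abs hmB) ?_
      rw [intervalIntegral.integral_of_le hmB, ← MeasureTheory.integral_Icc_eq_integral_Ioc]
      refine le_of_eq (setIntegral_congr_fun measurableSet_Icc fun u hu => ?_)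
      rw [abs_mul, abs_sub_comm, abs_of_nonneg (by linarith [hu.2] : (0:ℝ) ≤ B - u)]
    have hCq0 : (0:ℝ) ≤ ((q - 1) / (2 * q - 1)) ^ (1 - 1/q) :=
      Real.rpow_nonneg (div_nonneg (by linarith) (by linarith)) _
    calc |f (Real.sqrt (a * b)) - 1 / L * ∫ x in a..b, f x / x|
        = (1/L) * |(∫ u in A..m, (u - A) * φ u) + ∫ u in m..B, (u - B) * φ u| := by
          rw [htot, abs_mul, abs_of_pos (one_div_pos.2 hL0)]
      _ ≤ (1/L) * ((∫ u in Icc A m, (u - A) * |φ u|) + ∫ u in Icc m B, (B - u) * |φ u|) := by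
          refine mul_le_mul_of_nonneg_left ?_ (by positivity)
          exact le_trans (abs_add_le _ _) (add_le_add habs1 habs2)
      _ ≤ (1/L) * ((L/2)*(L/2) * (((q - 1) / (2 * q - 1)) ^ (1 - 1/q))
            * (a * α * (g₂ ((b * β ^ s / (a * α ^ s)) ^ (q / 2))) ^ (1/q))
          + (L/2)*(L/2) * (((q - 1) / (2 * q - 1)) ^ (1 - 1/q))
            * (b * β ^ s * α ^ (1-s) * (g₂ ((a * α ^ s / (b * β ^ s)) ^ (q / 2))) ^ (1/q))) := by
          exact mul_le_mul_of_nonneg_left (add_le_add hbound1 hbound2) (by positivity)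
      _ = 1 / 4 * Real.log (b / a) * ((q - 1) / (2 * q - 1)) ^ (1 - 1/q)
            * (a * α * (g₂ ((b * β ^ s / (a * α ^ s)) ^ (q / 2))) ^ (1/q)
              + b * β ^ s * α ^ (1-s) * (g₂ ((a * α ^ s / (b * β ^ s)) ^ (q / 2))) ^ (1/q)) := by
          rw [hLba]
          field_simp
          ring
end
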